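/- Let F(X) = ∑_{m=0}^∞ a_m X^m be a power series with radius of convergence R > 0, and let x₁, …, x_r be pairwise distinct nonzero complex numbers with |x_i| < R for all i. Then ∑_{m=0}^∞ a_m H_r^{(m)}(x₁, …, x_r) = ∑_{i=1}^{r} (∏_{j≠i} x_i/(x_i − x_j)) F(x_i), where H_r^{(m)} is the complete homogeneous symmetric polynomial of degree m, and the left-hand series converges absolutely. -/

import Mathlib

open Finset

/-- The complete homogeneous symmetric polynomial `H_r^{(m)}` evaluated at
`x : Fin r → ℂ`. -/
noncomputable def hpolyC (r m : ℕ) (x : Fin r → ℂ) : ℂ :=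
  ∑ c ∈ Finset.univ.filter (fun c : Fin r → Fin (m + 1) => ∑ i, (c i : ℕ) = m),
    ∏ i, x i ^ (c i : ℕ)

lemma one_sub_mul_geo (y : ℂ) :
    (1 - PowerSeries.C y * PowerSeries.X) * PowerSeries.mk (fun n => y ^ n) = 1 := by
  ext n
  rw [sub_mul, one_mul, mul_assoc, map_sub, PowerSeries.coeff_C_mul]
  cases n with
  | zero => simp
  | succ n => simp [PowerSeries.coeff_succ_X_mul, pow_succ, mul_comm]

lemma coeff_prod_geo (r m : ℕ) (x : Fin r → ℂ) :
    PowerSeries.coeff m (∏ i, PowerSeries.mk fun n => x i ^ n) = hpolyC r m x := by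
  rw [PowerSeries.coeff_prod]
  simp only [PowerSeries.coeff_mk]
  unfold hpolyC
  refine Finset.sum_bij' (fun l hl => fun k => (⟨l k, ?_⟩ : Fin (m+1)))
    (fun c _ => Finsupp.equivFunOnFinite.symm (fun k => (c k : ℕ))) ?_ ?_ ?_ ?_ ?_
  · -- l k < m + 1
    have hmem := (Finset.mem_finsuppAntidiag.mp hl).1
    have : l k ≤ m := hmem ▸ Finset.single_le_sum (f := fun k => l k) (fun _ _ => Nat.zero_le _) (Finset.mem_univ k)
    omega
  · intro l hl
    have hmem := (Finset.mem_finsuppAntidiag.mp hl).1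
    simp only [Finset.mem_filter, Finset.mem_univ, true_and]
    simpa using hmem
  · intro c hc
    simp only [Finset.mem_filter, Finset.mem_univ, true_and] at hc
    rw [Finset.mem_finsuppAntidiag]
    constructor
    · simpa using hc
    · exact fun _ _ => Finset.mem_univ _
  · intro l hl
    ext k
    simp
  · intro c hc
    ext k
    simp
  · intro l hl
    rfl

section
open Polynomial
lemma lagrange_sum (r : ℕ) (hr : 1 ≤ r) (x : Fin r → ℂ) (hinj : Function.Injective x)
    (h0 : ∀ i, x i ≠ 0) :
    ∑ i, Polynomial.C (∏ j ∈ univ.erase i, x i / (x i - x j)) *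
      ∏ j ∈ univ.erase i, (1 - Polynomial.C (x j) * Polynomial.X) = (1 : Polynomial ℂ) := by
  set q : Polynomial ℂ := ∑ i, Polynomial.C (∏ j ∈ univ.erase i, x i / (x i - x j)) *
      ∏ j ∈ univ.erase i, (1 - Polynomial.C (x j) * Polynomial.X) with hq
  have hsub : ∀ i j : Fin r, i ≠ j → x i - x j ≠ 0 := by
    intro i j hij
    exact sub_ne_zero.mpr (fun h => hij (hinj h))
  have heval : ∀ k : Fin r, q.eval ((x k)⁻¹) = 1 := by
    intro k
    rw [hq, eval_finset_sum]
    rw [Finset.sum_eq_single k]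
    · rw [eval_mul, eval_C, eval_prod, ← Finset.prod_mul_distrib]
      rw [Finset.prod_congr rfl (fun j hj => ?_), Finset.prod_const_one]
      have hjk : j ≠ k := by
        intro h; subst h; exact (Finset.mem_erase.mp hj).1 rfl
      have h1 : x k - x j ≠ 0 := hsub k j (Ne.symm hjk)
      simp only [eval_sub, eval_one, eval_mul, eval_C, eval_X]
      field_simp
      rw [mul_sub, mul_one, mul_div_cancel₀ _ (h0 k)]
    · intro i _ hik
      rw [eval_mul, eval_prod]
      apply mul_eq_zero_of_right
      apply Finset.prod_eq_zero (Finset.mem_erase.mpr ⟨fun h => hik h.symm, Finset.mem_univ k⟩)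
      simp [mul_inv_cancel₀ (h0 k)]
    · intro h; exact absurd (Finset.mem_univ k) h
  have hdeg : q.natDegree < r := by
    have : q.natDegree ≤ r - 1 := by
      rw [hq]
      refine Polynomial.natDegree_sum_le_of_forall_le _ _ (fun i _ => ?_)
      refine (Polynomial.natDegree_C_mul_le _ _).trans ?_
      refine (Polynomial.natDegree_prod_le _ _).trans ?_
      have hone : ∀ j : Fin r, (1 - Polynomial.C (x j) * Polynomial.X).natDegree ≤ 1 := by
        intro j
        refine (Polynomial.natDegree_sub_le _ _).trans ?_
        simp only [Polynomial.natDegree_one]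
        exact max_le (by omega) ((Polynomial.natDegree_C_mul_le _ _).trans (by simp))
      have hb := Finset.sum_le_card_nsmul (univ.erase i)
        (fun j => (1 - Polynomial.C (x j) * Polynomial.X).natDegree) 1 (fun j _ => hone j)
      simpa [Finset.card_erase_of_mem] using hb
    omega
  have hz : q - 1 = 0 := by
    refine Polynomial.eq_zero_of_natDegree_lt_card_of_eval_eq_zero _
      (f := fun i : Fin r => (x i)⁻¹) ?_ ?_ ?_
    · exact fun i j h => hinj (inv_injective h)
    · intro i; simp [heval i]
    · refine lt_of_le_of_lt (Polynomial.natDegree_sub_le _ _) ?_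
      simpa using hdeg
  have := sub_eq_zero.mp hz
  simpa using this

end

lemma hpoly_eq (r m : ℕ) (hr : 1 ≤ r) (x : Fin r → ℂ) (hinj : Function.Injective x)
    (h0 : ∀ i, x i ≠ 0) :
    hpolyC r m x = ∑ i, (∏ j ∈ univ.erase i, x i / (x i - x j)) * x i ^ m := by
  set g : Fin r → PowerSeries ℂ := fun i => PowerSeries.mk fun n => x i ^ n with hg
  have hps : (∑ i, PowerSeries.C (∏ j ∈ univ.erase i, x i / (x i - x j)) *
      ∏ j ∈ univ.erase i, (1 - PowerSeries.C (x j) * PowerSeries.X)) = 1 := by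
    have := congrArg (Polynomial.coeToPowerSeries.ringHom (R := ℂ)) (lagrange_sum r hr x hinj h0)
    simpa [map_sum, map_prod, map_mul, map_sub, map_one] using this
  have hprod : ∏ i, g i = ∑ i, PowerSeries.C (∏ j ∈ univ.erase i, x i / (x i - x j)) * g i := by
    calc ∏ i, g i = 1 * ∏ i, g i := (one_mul _).symm
      _ = (∑ i, PowerSeries.C (∏ j ∈ univ.erase i, x i / (x i - x j)) *
            ∏ j ∈ univ.erase i, (1 - PowerSeries.C (x j) * PowerSeries.X)) * ∏ i, g i := by
          rw [hps]
      _ = ∑ i, PowerSeries.C (∏ j ∈ univ.erase i, x i / (x i - x j)) * g i := by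
          rw [Finset.sum_mul]
          refine Finset.sum_congr rfl (fun i _ => ?_)
          rw [mul_assoc]
          congr 1
          calc (∏ j ∈ univ.erase i, (1 - PowerSeries.C (x j) * PowerSeries.X)) * ∏ j, g j
              = (∏ j ∈ univ.erase i, (1 - PowerSeries.C (x j) * PowerSeries.X)) *
                (g i * ∏ j ∈ univ.erase i, g j) := by rw [Finset.mul_prod_erase _ _ (mem_univ i)]
            _ = g i * ∏ j ∈ univ.erase i, ((1 - PowerSeries.C (x j) * PowerSeries.X) * g j) := by
                rw [Finset.prod_mul_distrib]; ring
            _ = g i := by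
                rw [Finset.prod_congr rfl (fun j _ => one_sub_mul_geo (x j)),
                  Finset.prod_const_one, mul_one]
  have := congrArg (PowerSeries.coeff m) hprod
  rw [coeff_prod_geo] at this
  rw [this, map_sum]
  refine Finset.sum_congr rfl (fun i _ => ?_)
  rw [PowerSeries.coeff_C_mul, hg, PowerSeries.coeff_mk]

/-- for a power series `F(X) = ∑ a_m X^m` converging absolutely on
`|z| < R` and pairwise distinct nonzero `x_i` with `|x_i| < R`,
`∑_m a_m H_r^{(m)}(x₁,…,x_r) = ∑_i (∏_{j≠i} x_i/(x_i-x_j)) F(x_i)`, the left-hand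
series converging absolutely. -/
theorem stmt10 (a : ℕ → ℂ) (R : ℝ) (hR : 0 < R)
    (hconv : ∀ z : ℂ, ‖z‖ < R →
      Summable fun m : ℕ => ‖a m‖ * ‖z‖ ^ m)
    (r : ℕ) (hr : 1 ≤ r) (x : Fin r → ℂ)
    (hinj : Function.Injective x) (h0 : ∀ i, x i ≠ 0)
    (hlt : ∀ i, ‖x i‖ < R) :
    Summable (fun m : ℕ => ‖a m * hpolyC r m x‖) ∧
    ∑' m : ℕ, a m * hpolyC r m x =
      ∑ i, (∏ j ∈ Finset.univ.erase i, x i / (x i - x j)) *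
        ∑' m : ℕ, a m * x i ^ m := by
  set c : Fin r → ℂ := fun i => ∏ j ∈ univ.erase i, x i / (x i - x j) with hc
  have hkey : ∀ m, hpolyC r m x = ∑ i, c i * x i ^ m :=
    fun m => hpoly_eq r m hr x hinj h0
  have hsummi : ∀ i, Summable (fun m : ℕ => a m * x i ^ m) := by
    intro i
    refine Summable.of_norm ?_
    have := hconv (x i) (hlt i)
    simpa [norm_mul, norm_pow] using this
  have hsumm : Summable (fun m : ℕ => ‖a m * hpolyC r m x‖) := by
    have hmaj : Summable (fun m : ℕ => ∑ i, ‖c i‖ *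
        (‖a m‖ * ‖x i‖ ^ m)) :=
      summable_sum (fun i _ => (hconv (x i) (hlt i)).mul_left _)
    refine Summable.of_nonneg_of_le (fun m => norm_nonneg _) (fun m => ?_) hmaj
    rw [norm_mul, hkey m]
    calc ‖a m‖ * ‖∑ i, c i * x i ^ m‖
        ≤ ‖a m‖ * ∑ i, ‖c i * x i ^ m‖ := by
          refine mul_le_mul_of_nonneg_left ?_ (norm_nonneg _)
          exact norm_sum_le _ _
      _ = ∑ i, ‖c i‖ * (‖a m‖ * ‖x i‖ ^ m) := by
          rw [Finset.mul_sum]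
          exact Finset.sum_congr rfl (fun i _ => by rw [norm_mul, norm_pow]; ring
          )
  refine ⟨hsumm, ?_⟩
  have h1 : ∀ m : ℕ, a m * hpolyC r m x = ∑ i, c i * (a m * x i ^ m) := by
    intro m
    rw [hkey m, Finset.mul_sum]
    exact Finset.sum_congr rfl (fun i _ => by ring)
  calc ∑' m : ℕ, a m * hpolyC r m x = ∑' m : ℕ, ∑ i, c i * (a m * x i ^ m) :=
        tsum_congr h1
    _ = ∑ i, ∑' m : ℕ, c i * (a m * x i ^ m) :=
        Summable.tsum_finsetSum (fun i _ => (hsummi i).mul_left _)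
    _ = ∑ i, c i * ∑' m : ℕ, a m * x i ^ m := by
        exact Finset.sum_congr rfl (fun i _ => tsum_mul_left)
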